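/- Let m_d(n) denote the largest real number such that every n-point set in [0,1]^d admits an empty open axis-parallel box of volume at least m_d(n). Then for all positive integers b, d, n, one has (n+1)·m_d(n) ≥ (b+1)·m_d(b) − o(1) as n → ∞ with b, d fixed; consequently the limit c_d = lim_{n→∞} n·m_d(n) exists. -/

import Mathlib

open Finset

/-- The dispersion of a finite point set `P` in `[0,1]^d`: the supremum of volumes of
open axis-parallel boxes in `[0,1]^d` disjoint from `P`. -/
noncomputable def dispersion (d : ℕ) (P : Finset (Fin d → ℝ)) : ℝ :=
  sSup {v : ℝ | ∃ a b : Fin d → ℝ,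
    (∀ i, 0 ≤ a i ∧ a i < b i ∧ b i ≤ 1) ∧
    (∀ p ∈ P, ∃ i, p i ∉ Set.Ioo (a i) (b i)) ∧
    v = ∏ i, (b i - a i)}

/-- `mdn d n` : the minimal dispersion over `n`-point subsets of `[0,1]^d`. -/
noncomputable def mdn (d n : ℕ) : ℝ :=
  sInf {v : ℝ | ∃ P : Finset (Fin d → ℝ), P.card = n ∧
    (∀ p ∈ P, ∀ i, p i ∈ Set.Icc (0:ℝ) 1) ∧ v = dispersion d P}


namespace Disp

def volset (d : ℕ) (P : Finset (Fin d → ℝ)) : Set ℝ :=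
  {v : ℝ | ∃ a b : Fin d → ℝ,
    (∀ i, 0 ≤ a i ∧ a i < b i ∧ b i ≤ 1) ∧
    (∀ p ∈ P, ∃ i, p i ∉ Set.Ioo (a i) (b i)) ∧
    v = ∏ i, (b i - a i)}

lemma dispersion_eq (d : ℕ) (P : Finset (Fin d → ℝ)) :
    dispersion d P = sSup (volset d P) := rfl

def cube (d : ℕ) : Set (Fin d → ℝ) := {f | ∀ i, f i ∈ Set.Icc (0:ℝ) 1}

def mdnset (d n : ℕ) : Set ℝ :=
  {v : ℝ | ∃ P : Finset (Fin d → ℝ), P.card = n ∧ (↑P ⊆ cube d) ∧ v = dispersion d P}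

lemma mdn_eq (d n : ℕ) : mdn d n = sInf (mdnset d n) := by
  have : mdnset d n = {v : ℝ | ∃ P : Finset (Fin d → ℝ), P.card = n ∧
      (∀ p ∈ P, ∀ i, p i ∈ Set.Icc (0:ℝ) 1) ∧ v = dispersion d P} := by
    ext v
    constructor
    · rintro ⟨P, h1, h2, h3⟩; exact ⟨P, h1, fun p hp i => h2 hp i, h3⟩
    · rintro ⟨P, h1, h2, h3⟩; exact ⟨P, h1, fun p hp i => h2 p hp i, h3⟩
  rw [mdnset] at this
  rw [mdn, ← this, mdnset]

lemma volset_nonneg {d : ℕ} {P : Finset (Fin d → ℝ)} {v : ℝ} (h : v ∈ volset d P) :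
    0 ≤ v := by
  obtain ⟨a, b, hab, -, rfl⟩ := h
  exact Finset.prod_nonneg fun i _ => by linarith [(hab i).1, (hab i).2.1, (hab i).2.2]

lemma volset_le_one {d : ℕ} {P : Finset (Fin d → ℝ)} {v : ℝ} (h : v ∈ volset d P) :
    v ≤ 1 := by
  obtain ⟨a, b, hab, -, rfl⟩ := h
  exact Finset.prod_le_one
    (fun i _ => by linarith [(hab i).1, (hab i).2.1, (hab i).2.2])
    (fun i _ => by linarith [(hab i).1, (hab i).2.1, (hab i).2.2])

lemma volset_bddAbove (d : ℕ) (P : Finset (Fin d → ℝ)) : BddAbove (volset d P) :=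
  ⟨1, fun _ h => volset_le_one h⟩

lemma dispersion_nonneg (d : ℕ) (P : Finset (Fin d → ℝ)) : 0 ≤ dispersion d P :=
  Real.sSup_nonneg (fun _ h => volset_nonneg h)

lemma dispersion_le_one (d : ℕ) (P : Finset (Fin d → ℝ)) : dispersion d P ≤ 1 :=
  Real.sSup_le (fun _ h => volset_le_one h) zero_le_one

lemma volset_anti {d : ℕ} {P Q : Finset (Fin d → ℝ)} (h : P ⊆ Q) :
    volset d Q ⊆ volset d P := by
  rintro v ⟨a, b, hab, hemp, rfl⟩
  exact ⟨a, b, hab, fun p hp => hemp p (h hp), rfl⟩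

lemma dispersion_anti {d : ℕ} {P Q : Finset (Fin d → ℝ)} (h : P ⊆ Q) :
    dispersion d Q ≤ dispersion d P := by
  rcases Set.eq_empty_or_nonempty (volset d Q) with he | hne
  · rw [dispersion_eq, he, Real.sSup_empty]; exact dispersion_nonneg d P
  · exact csSup_le_csSup (volset_bddAbove d P) hne (volset_anti h)

lemma le_dispersion_of_mem {d : ℕ} {P : Finset (Fin d → ℝ)} {v : ℝ} (h : v ∈ volset d P) :
    v ≤ dispersion d P :=
  le_csSup (volset_bddAbove d P) h

/-- Pigeonhole: one of the `K+1` equal slabs (in coordinate `i₀`) contains at most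
`b` points of `R` in its open interior. -/
lemma exists_low_slab {d : ℕ} (i₀ : Fin d) (R : Finset (Fin d → ℝ)) (b K : ℕ)
    (h : R.card < (K+1)*(b+1)) :
    ∃ j : ℕ, j ≤ K ∧
      (R.filter (fun p => p i₀ ∈ Set.Ioo ((j:ℝ)/((K:ℝ)+1)) (((j:ℝ)+1)/((K:ℝ)+1)))).card ≤ b := by
  classical
  by_contra hcon
  push_neg at hcon
  have hdis : ∀ x ∈ Finset.range (K+1), ∀ y ∈ Finset.range (K+1), x ≠ y →
      Disjoint (R.filter (fun p => p i₀ ∈ Set.Ioo ((x:ℝ)/((K:ℝ)+1)) (((x:ℝ)+1)/((K:ℝ)+1))))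
        (R.filter (fun p => p i₀ ∈ Set.Ioo ((y:ℝ)/((K:ℝ)+1)) (((y:ℝ)+1)/((K:ℝ)+1)))) := by
    intro x hx y hy hxy
    rw [Finset.disjoint_left]
    intro p hp hp'
    have h1 := (Finset.mem_filter.1 hp).2
    have h2 := (Finset.mem_filter.1 hp').2
    have hK : (0:ℝ) < (K:ℝ)+1 := by positivity
    rcases lt_or_gt_of_ne hxy with hlt | hlt
    · have hxy' : ((x:ℝ)+1) ≤ (y:ℝ) := by exact_mod_cast hlt
      have := (div_le_div_iff_of_pos_right hK).mpr hxy'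
      have := h1.2; have := h2.1; linarith
    · have hxy' : ((y:ℝ)+1) ≤ (x:ℝ) := by exact_mod_cast hlt
      have := (div_le_div_iff_of_pos_right hK).mpr hxy'
      have := h2.2; have := h1.1; linarith
  have hsum : ∑ j ∈ Finset.range (K+1),
      (R.filter (fun p => p i₀ ∈ Set.Ioo ((j:ℝ)/((K:ℝ)+1)) (((j:ℝ)+1)/((K:ℝ)+1)))).card ≤ R.card := by
    rw [← Finset.card_biUnion hdis]
    exact Finset.card_le_card (Finset.biUnion_subset.2 (fun j _ => Finset.filter_subset _ _))
  have hbig : (K+1)*(b+1) ≤ ∑ j ∈ Finset.range (K+1),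
      (R.filter (fun p => p i₀ ∈ Set.Ioo ((j:ℝ)/((K:ℝ)+1)) (((j:ℝ)+1)/((K:ℝ)+1)))).card := by
    calc (K+1)*(b+1) = ∑ _j ∈ Finset.range (K+1), (b+1) := by
          rw [Finset.sum_const, Finset.card_range, smul_eq_mul]
      _ ≤ _ := Finset.sum_le_sum (fun j hj => hcon j (Nat.lt_succ_iff.1 (Finset.mem_range.1 hj)))
  exact absurd h (not_lt.2 (hbig.trans hsum))

/-- Every finite set admits an empty box: `volset` is nonempty (for `d ≥ 1`). -/
lemma volset_nonempty {d : ℕ} (hd : 1 ≤ d) (R : Finset (Fin d → ℝ)) :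
    (volset d R).Nonempty := by
  classical
  set i₀ : Fin d := ⟨0, hd⟩
  obtain ⟨j, hj, hcard⟩ := exists_low_slab i₀ R 0 R.card (by omega)
  set K := R.card
  have hK : (0:ℝ) < (K:ℝ)+1 := by positivity
  refine ⟨∏ i, ((if i = i₀ then ((j:ℝ)+1)/((K:ℝ)+1) else 1) - (if i = i₀ then (j:ℝ)/((K:ℝ)+1) else 0)),
    (fun i => if i = i₀ then (j:ℝ)/((K:ℝ)+1) else 0),
    (fun i => if i = i₀ then ((j:ℝ)+1)/((K:ℝ)+1) else 1), ?_, ?_, rfl⟩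
  · intro i
    by_cases hi : i = i₀ <;> simp only [hi, if_pos, if_true, if_neg, if_false]
    · refine ⟨by positivity, by apply div_lt_div_of_pos_right (by linarith) hK, ?_⟩
      rw [div_le_one hK]
      have : (j:ℝ) ≤ (K:ℝ) := by exact_mod_cast hj
      linarith
    · exact ⟨le_refl 0, zero_lt_one, le_refl 1⟩
  · intro p hp
    refine ⟨i₀, fun hmem => ?_⟩
    simp only [if_pos rfl] at hmem
    have : p ∈ R.filter (fun p => p i₀ ∈ Set.Ioo ((j:ℝ)/((K:ℝ)+1)) (((j:ℝ)+1)/((K:ℝ)+1))) :=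
      Finset.mem_filter.2 ⟨hp, hmem⟩
    have h2 := Finset.card_pos.2 ⟨p, this⟩
    exact absurd (h2.trans_le hcard) (lt_irrefl 0)

lemma dispersion_pos_set {d : ℕ} (hd : 1 ≤ d) (R : Finset (Fin d → ℝ)) :
    ∃ v ∈ volset d R, 0 ≤ v := by
  obtain ⟨v, hv⟩ := volset_nonempty hd R
  exact ⟨v, hv, volset_nonneg hv⟩

lemma cube_infinite {d : ℕ} (hd : 1 ≤ d) : (cube d).Infinite := by
  have h1 : (Set.Icc (0:ℝ) 1).Infinite := Set.Icc_infinite zero_lt_one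
  have h2 : Set.InjOn (fun t : ℝ => (fun _ : Fin d => t)) (Set.Icc (0:ℝ) 1) := by
    intro x _ y _ hxy
    exact congrFun hxy ⟨0, hd⟩
  have h3 := h1.image h2
  refine h3.mono ?_
  rintro f ⟨t, ht, rfl⟩
  exact fun i => ht

lemma exists_cube_finset {d : ℕ} (hd : 1 ≤ d) (n : ℕ) (avoid : Finset (Fin d → ℝ)) :
    ∃ T : Finset (Fin d → ℝ), ↑T ⊆ cube d \ ↑avoid ∧ T.card = n :=
  ((cube_infinite hd).diff avoid.finite_toSet).exists_subset_card_eq n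

lemma mdnset_nonempty {d : ℕ} (hd : 1 ≤ d) (n : ℕ) : (mdnset d n).Nonempty := by
  obtain ⟨T, hT, hcard⟩ := exists_cube_finset hd n ∅
  exact ⟨dispersion d T, T, hcard, fun p hp => (hT hp).1, rfl⟩

lemma mdnset_bddBelow (d n : ℕ) : BddBelow (mdnset d n) := by
  refine ⟨0, ?_⟩
  rintro v ⟨P, -, -, rfl⟩
  exact dispersion_nonneg d P

lemma mdn_nonneg (d n : ℕ) : 0 ≤ mdn d n := by
  rw [mdn_eq]
  exact Real.sInf_nonneg (by rintro v ⟨P, -, -, rfl⟩; exact dispersion_nonneg d P)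

lemma mdn_le_dispersion {d n : ℕ} {P : Finset (Fin d → ℝ)} (hcard : P.card = n)
    (hcube : ↑P ⊆ cube d) : mdn d n ≤ dispersion d P := by
  rw [mdn_eq]
  exact csInf_le (mdnset_bddBelow d n) ⟨P, hcard, hcube, rfl⟩

lemma mdn_le_one {d : ℕ} (hd : 1 ≤ d) (n : ℕ) : mdn d n ≤ 1 := by
  obtain ⟨T, hT, hcard⟩ := exists_cube_finset hd n ∅
  exact (mdn_le_dispersion hcard (fun p hp => (hT hp).1)).trans (dispersion_le_one d T)

lemma mdn_antitone {d : ℕ} (hd : 1 ≤ d) {n m : ℕ} (hnm : n ≤ m) : mdn d m ≤ mdn d n := by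
  rw [mdn_eq d n]
  apply le_csInf (mdnset_nonempty hd n)
  rintro v ⟨P, hcard, hcube, rfl⟩
  obtain ⟨T, hT, hTcard⟩ := exists_cube_finset hd (m - n) P
  have hdisj : Disjoint P T := by
    rw [Finset.disjoint_right]
    intro p hp
    exact fun hmem => (hT hp).2 hmem
  have hcard' : (P ∪ T).card = m := by
    rw [Finset.card_union_of_disjoint hdisj, hcard, hTcard]
    omega
  have hcube' : ↑(P ∪ T) ⊆ cube d := by
    intro p hp
    rcases Finset.mem_union.1 hp with h | h
    · exact hcube h
    · exact (hT h).1
  exact (mdn_le_dispersion hcard' hcube').trans (dispersion_anti Finset.subset_union_left)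

/-- Main lower bound: scaling a near-optimal `b`-point configuration inside a low-occupancy
slab shows `mdn d b - δ ≤ (⌊n/(b+1)⌋ + 1) * mdn d n`. -/
lemma main_lb {d : ℕ} (hd : 1 ≤ d) (b n : ℕ) {δ : ℝ} (hδ : 0 < δ) :
    mdn d b - δ ≤ (((n / (b+1) : ℕ) : ℝ) + 1) * mdn d n := by
  classical
  set K : ℕ := n / (b+1) with hK
  set W : ℝ := (K:ℝ) + 1 with hWdef
  have hW : (0:ℝ) < W := by positivity
  have key : ∀ v ∈ mdnset d n, (mdn d b - δ) / W ≤ v := by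
    rintro v ⟨P, hcard, hcube, rfl⟩
    set i₀ : Fin d := ⟨0, hd⟩
    have hn : P.card < (K+1)*(b+1) := by
      have h1 := Nat.div_add_mod n (b+1)
      have h2 := Nat.mod_lt n (show 0 < b+1 by omega)
      rw [hcard]
      calc n = (b+1) * K + n % (b+1) := by rw [hK]; omega
        _ < (b+1) * K + (b+1) := by omega
        _ = (K+1)*(b+1) := by ring
    obtain ⟨j, hj, hcnt⟩ := exists_low_slab i₀ P b K hn
    set L : ℝ := (j:ℝ)/W with hLdef
    have hL0 : 0 ≤ L := by positivity
    have hjW : (j:ℝ) + 1 ≤ W := by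
      rw [hWdef]; have : (j:ℝ) ≤ (K:ℝ) := by exact_mod_cast hj
      linarith
    set F := P.filter (fun p => p i₀ ∈ Set.Ioo ((j:ℝ)/W) (((j:ℝ)+1)/W)) with hF
    set φ : (Fin d → ℝ) → (Fin d → ℝ) :=
      fun p => Function.update p i₀ ((p i₀ - L) * W) with hφ
    set Qs := F.image φ with hQs
    have hQscard : Qs.card ≤ b := le_trans (Finset.card_image_le) hcnt
    obtain ⟨T, hT, hTcard⟩ := exists_cube_finset hd (b - Qs.card) Qs
    set Q' := Qs ∪ T with hQ'
    have hdisj : Disjoint Qs T := by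
      rw [Finset.disjoint_right]; intro p hp
      exact fun hmem => (hT hp).2 hmem
    have hQ'card : Q'.card = b := by
      rw [hQ', Finset.card_union_of_disjoint hdisj, hTcard]; omega
    have hslabmem : ∀ p ∈ F, φ p i₀ ∈ Set.Ioo (0:ℝ) 1 := by
      intro p hp
      have hmem := (Finset.mem_filter.1 hp).2
      rw [Set.mem_Ioo] at hmem ⊢
      have h1 : (j:ℝ)/W < p i₀ := hmem.1
      have h2 : p i₀ < ((j:ℝ)+1)/W := hmem.2
      rw [lt_div_iff₀ hW] at h2
      have hup : φ p i₀ = (p i₀ - L) * W := by rw [hφ]; simp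
      rw [hup, hLdef]
      have hc : ((j:ℝ)/W)*W = (j:ℝ) := div_mul_cancel₀ _ (ne_of_gt hW)
      constructor
      · exact mul_pos (by linarith) hW
      · nlinarith [hc, h2]
    have hQ'cube : ↑Q' ⊆ cube d := by
      intro q hq
      rcases Finset.mem_union.1 hq with h | h
      · obtain ⟨p, hp, rfl⟩ := Finset.mem_image.1 h
        intro i
        by_cases hi : i = i₀
        · subst hi
          have := hslabmem p hp
          exact ⟨le_of_lt this.1, le_of_lt this.2⟩
        · have : φ p i = p i := Function.update_of_ne hi _ _
          rw [this]
          exact hcube (Finset.mem_coe.2 ((Finset.mem_filter.1 hp).1)) i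
      · exact (hT h).1
    have hmdnb : mdn d b ≤ dispersion d Q' := mdn_le_dispersion hQ'card hQ'cube
    have hlt : mdn d b - δ < sSup (volset d Q') := by
      rw [← dispersion_eq]; linarith
    obtain ⟨vv, hvvmem, hvvlt⟩ := exists_lt_of_lt_csSup (volset_nonempty hd Q') hlt
    obtain ⟨vA, vB, hcond, hempty, rfl⟩ := hvvmem
    -- pull back the box
    set A : Fin d → ℝ := fun i => if i = i₀ then L + vA i₀ / W else vA i with hA
    set B : Fin d → ℝ := fun i => if i = i₀ then L + vB i₀ / W else vB i with hB
    have hAi₀ : A i₀ = L + vA i₀ / W := by rw [hA]; simp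
    have hBi₀ : B i₀ = L + vB i₀ / W := by rw [hB]; simp
    have hAi : ∀ i, i ≠ i₀ → A i = vA i := fun i hi => by rw [hA]; simp [hi]
    have hBi : ∀ i, i ≠ i₀ → B i = vB i := fun i hi => by rw [hB]; simp [hi]
    have hcW : (1:ℝ)/W * W = 1 := by field_simp
    have h5 : ((j:ℝ)+1)/W = (j:ℝ)/W + 1/W := add_div _ _ _
    have h6 : ((j:ℝ)+1)/W ≤ 1 := by rw [div_le_one hW]; exact hjW
    have hABcond : ∀ i, 0 ≤ A i ∧ A i < B i ∧ B i ≤ 1 := by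
      intro i
      by_cases hi : i = i₀
      · subst hi
        obtain ⟨h1, h2, h3⟩ := hcond i₀
        rw [hAi₀, hBi₀]
        refine ⟨by positivity, ?_, ?_⟩
        · have := div_lt_div_of_pos_right h2 hW
          linarith
        · have h4 : vB i₀ / W ≤ 1 / W := by gcongr
          rw [hLdef]
          linarith
      · rw [hAi i hi, hBi i hi]
        exact hcond i
    have hABempty : ∀ p ∈ P, ∃ i, p i ∉ Set.Ioo (A i) (B i) := by
      intro p hp
      by_cases hslab : p i₀ ∈ Set.Ioo ((j:ℝ)/W) (((j:ℝ)+1)/W)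
      · have hpF : p ∈ F := Finset.mem_filter.2 ⟨hp, hslab⟩
        have hφp : φ p ∈ Q' := Finset.mem_union_left _ (Finset.mem_image_of_mem φ hpF)
        obtain ⟨i, hi⟩ := hempty (φ p) hφp
        by_cases hii : i = i₀
        · subst hii
          refine ⟨i₀, fun hcon => hi ?_⟩
          have hup : φ p i₀ = (p i₀ - L) * W := by rw [hφ]; simp
          rw [hAi₀, hBi₀] at hcon
          rw [Set.mem_Ioo] at hcon ⊢
          rw [hup]
          obtain ⟨hc1, hc2⟩ := hcon
          constructor
          · have h9 : vA i₀ / W < p i₀ - L := by linarith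
            have h10 := mul_lt_mul_of_pos_right h9 hW
            rw [div_mul_cancel₀ _ (ne_of_gt hW)] at h10
            exact h10
          · have h9 : p i₀ - L < vB i₀ / W := by linarith
            have h10 := mul_lt_mul_of_pos_right h9 hW
            rw [div_mul_cancel₀ _ (ne_of_gt hW)] at h10
            exact h10
        · refine ⟨i, fun hcon => hi ?_⟩
          have : φ p i = p i := Function.update_of_ne hii _ _
          rw [this]
          rw [hAi i hii, hBi i hii] at hcon
          exact hcon
      · refine ⟨i₀, fun hcon => hslab ?_⟩
        rw [hAi₀, hBi₀] at hcon
        rw [Set.mem_Ioo] at hcon ⊢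
        obtain ⟨h1, h2, h3⟩ := hcond i₀
        have h4 : 0 ≤ vA i₀ / W := by positivity
        have hg : vB i₀ / W ≤ 1 / W := by gcongr
        have h7 := hcon.1
        have h8 := hcon.2
        rw [hLdef] at h7 h8
        constructor
        · linarith
        · linarith
    have hvol : (∏ i, (B i - A i)) = (∏ i, (vB i - vA i)) / W := by
      have hsplit : ∀ i, B i - A i = (if i = i₀ then 1 / W else 1) * (vB i - vA i) := by
        intro i
        by_cases hi : i = i₀
        · subst hi; rw [hAi₀, hBi₀, if_pos rfl]; field_simp; ring
        · rw [hAi i hi, hBi i hi, if_neg hi]; ring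
      calc ∏ i, (B i - A i) = ∏ i, ((if i = i₀ then 1 / W else 1) * (vB i - vA i)) := by
            exact Finset.prod_congr rfl (fun i _ => hsplit i)
        _ = (∏ i, (if i = i₀ then 1 / W else 1)) * ∏ i, (vB i - vA i) := by
            rw [Finset.prod_mul_distrib]
        _ = (1 / W) * ∏ i, (vB i - vA i) := by
            rw [Finset.prod_ite_eq' Finset.univ i₀ (fun _ => 1 / W)]
            simp
        _ = (∏ i, (vB i - vA i)) / W := by ring
    have hmem : (∏ i, (vB i - vA i)) / W ∈ volset d P := by
      rw [← hvol]
      exact ⟨A, B, hABcond, hABempty, rfl⟩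
    have hle : (∏ i, (vB i - vA i)) / W ≤ dispersion d P := le_dispersion_of_mem hmem
    linarith [div_lt_div_of_pos_right hvvlt hW]
  have h1 : (mdn d b - δ) / W ≤ mdn d n := by
    rw [mdn_eq]
    exact le_csInf (mdnset_nonempty hd n) key
  rw [div_le_iff₀ hW] at h1
  calc mdn d b - δ ≤ mdn d n * W := h1
    _ = W * mdn d n := by ring


lemma exists_digits {p : ℕ} (hp : 1 ≤ p) : ∀ (k l : ℕ), l < p^k →
    ∃ a : ℕ → ℕ, (∀ j, a j < p) ∧ ∑ j ∈ Finset.range k, a j * p^(k-1-j) = l := by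
  intro k
  induction k with
  | zero =>
    intro l hl
    refine ⟨fun _ => 0, fun _ => hp, by simpa using (Nat.lt_one_iff.1 (by simpa using hl)).symm⟩
  | succ k ih =>
    intro l hl
    have hpk : 0 < p^k := pow_pos hp k
    obtain ⟨a, ha, hsum⟩ := ih (l % p^k) (Nat.mod_lt _ hpk)
    refine ⟨fun j => if j = 0 then l / p^k else a (j-1), ?_, ?_⟩
    · intro j
      by_cases hj : j = 0
      · simp only [hj, eq_self_iff_true, if_true]
        rw [Nat.div_lt_iff_lt_mul hpk]
        exact lt_of_lt_of_le hl (le_of_eq (pow_succ' p k))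
      · simp only [if_neg hj]
        exact ha (j-1)
    · rw [Finset.sum_range_succ']
      have h1 : ∀ i ∈ Finset.range k,
          (if i+1 = 0 then l / p^k else a (i+1-1)) * p^(k+1-1-(i+1)) = a i * p^(k-1-i) := by
        intro i _
        simp only [Nat.succ_ne_zero, if_false, Nat.add_sub_cancel]
        congr 2
        omega
      rw [Finset.sum_congr rfl h1, hsum]
      simp only [if_pos rfl]
      have h2 : k+1-1-0 = k := by omega
      rw [h2]
      have h3 := Nat.div_add_mod l (p^k)
      rw [mul_comm] at h3
      exact (Nat.add_comm _ _).trans h3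

variable {p : ℕ}

lemma digit_tail_lt (hp : 2 ≤ p) (c : ℕ → ℕ) (hc : ∀ j, c j < p) (k m : ℕ) :
    ∑ j ∈ Finset.Ico k m, (c j : ℝ) / (p:ℝ)^(j+1) < 1/(p:ℝ)^k := by
  have hp0 : (0:ℝ) < p := by positivity
  have hterm : ∀ j, (c j : ℝ) / (p:ℝ)^(j+1) ≤ 1/(p:ℝ)^j - 1/(p:ℝ)^(j+1) := by
    intro j
    have h1 : (c j : ℝ) ≤ (p:ℝ) - 1 := by
      have := hc j
      have : (c j : ℝ) + 1 ≤ (p:ℝ) := by exact_mod_cast this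
      linarith
    have h2 : 1/(p:ℝ)^j - 1/(p:ℝ)^(j+1) = ((p:ℝ) - 1)/(p:ℝ)^(j+1) := by
      field_simp
      ring
    rw [h2]
    exact div_le_div_of_nonneg_right h1 (by positivity)
  calc ∑ j ∈ Finset.Ico k m, (c j : ℝ) / (p:ℝ)^(j+1)
      ≤ ∑ j ∈ Finset.Ico k m, (1/(p:ℝ)^j - 1/(p:ℝ)^(j+1)) :=
        Finset.sum_le_sum (fun j _ => hterm j)
    _ = ∑ j ∈ Finset.range (m-k), (1/(p:ℝ)^(k+j) - 1/(p:ℝ)^(k+j+1)) := by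
        rw [Finset.sum_Ico_eq_sum_range]
    _ = 1/(p:ℝ)^(k+0) - 1/(p:ℝ)^(k+(m-k)) := by
        rw [← Finset.sum_range_sub' (fun j => 1/(p:ℝ)^(k+j)) (m-k)]
        exact Finset.sum_congr rfl (fun j _ => by ring_nf)
    _ < 1/(p:ℝ)^k := by
        have : (0:ℝ) < 1/(p:ℝ)^(k+(m-k)) := by positivity
        simp only [Nat.add_zero]
        linarith

lemma digit_tail_nonneg (c : ℕ → ℕ) (k m : ℕ) :
    0 ≤ ∑ j ∈ Finset.Ico k m, (c j : ℝ) / (p:ℝ)^(j+1) :=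
  Finset.sum_nonneg (fun j _ => by positivity)

lemma digit_head_eq (hp : 1 ≤ p) (c : ℕ → ℕ) (k : ℕ) :
    ∑ j ∈ Finset.range k, (c j : ℝ) / (p:ℝ)^(j+1)
      = ((∑ j ∈ Finset.range k, c j * p^(k-1-j) : ℕ) : ℝ) / (p:ℝ)^k := by
  have hp0 : (0:ℝ) < p := by exact_mod_cast hp
  rw [Nat.cast_sum, Finset.sum_div]
  refine Finset.sum_congr rfl (fun j hj => ?_)
  have hjk : j < k := Finset.mem_range.1 hj
  push_cast
  rw [div_eq_div_iff (by positivity) (by positivity)]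
  rw [mul_assoc, ← pow_add]
  congr 2
  omega

open Polynomial in
noncomputable def polyOf (p m : ℕ) (v : Fin m → ZMod p) : Polynomial (ZMod p) :=
  ∑ j : Fin m, Polynomial.C (v j) * Polynomial.X ^ (j:ℕ)

open Polynomial in
lemma polyOf_coeff (p m : ℕ) (v : Fin m → ZMod p) (l : ℕ) (hl : l < m) :
    (polyOf p m v).coeff l = v ⟨l, hl⟩ := by
  classical
  rw [polyOf, Polynomial.finset_sum_coeff]
  rw [Finset.sum_eq_single (⟨l, hl⟩ : Fin m)]
  · simp
  · intro j _ hj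
    rw [Polynomial.coeff_C_mul, Polynomial.coeff_X_pow, if_neg, mul_zero]
    intro hc
    exact hj (Fin.ext hc.symm)
  · intro h
    exact absurd (Finset.mem_univ _) h

open Polynomial in
lemma polyOf_natDegree_le (p m : ℕ) (v : Fin m → ZMod p) :
    (polyOf p m v).natDegree ≤ m - 1 := by
  apply Polynomial.natDegree_sum_le_of_forall_le
  intro j _
  refine le_trans (Polynomial.natDegree_C_mul_X_pow_le _ _) ?_
  omega

open Polynomial in
lemma taylor_dvd_of_X_pow_dvd {p : ℕ} (a : ZMod p) (f : Polynomial (ZMod p)) (k : ℕ)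
    (h : Polynomial.X^k ∣ Polynomial.taylor a f) :
    (Polynomial.X - Polynomial.C a)^k ∣ f := by
  obtain ⟨g, hg⟩ := h
  have hf : f = (Polynomial.taylor a f).comp (Polynomial.X - Polynomial.C a) := by
    rw [Polynomial.taylor_apply, Polynomial.comp_assoc]
    simp [Polynomial.add_comp]
  rw [hf, hg, Polynomial.mul_comp, Polynomial.X_pow_comp]
  exact Dvd.intro _ rfl

open Polynomial in
/-- Existence of polynomials with prescribed truncated Taylor expansions at `d ≤ p`
distinct points: the Reed–Solomon/Faure net. -/
lemma exists_net_poly {p : ℕ} (hp : p.Prime) (d m : ℕ) (hdp : d ≤ p)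
    (k : Fin d → ℕ) (hk : ∑ i, k i = m) (t : ∀ i, Fin (k i) → ZMod p) :
    ∃ v : Fin m → ZMod p, ∀ (i : Fin d) (j : ℕ) (hj : j < k i),
      (Polynomial.taylor ((i:ℕ) : ZMod p) (polyOf p m v)).coeff j = t i ⟨j, hj⟩ := by
  classical
  haveI : Fact (Nat.Prime p) := ⟨hp⟩
  set α : Fin d → ZMod p := fun i => ((i:ℕ) : ZMod p) with hα
  have hαinj : Function.Injective α := by
    intro i j hij
    have h2 : ((i:ℕ) : ZMod p) = ((j:ℕ) : ZMod p) := hij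
    have h3 := congrArg ZMod.val h2
    rw [ZMod.val_natCast_of_lt (lt_of_lt_of_le i.2 hdp),
        ZMod.val_natCast_of_lt (lt_of_lt_of_le j.2 hdp)] at h3
    exact Fin.ext h3
  set T : (Fin m → ZMod p) → (∀ i : Fin d, Fin (k i) → ZMod p) :=
    fun v => fun i j => (Polynomial.taylor (α i) (polyOf p m v)).coeff (j:ℕ) with hT
  have hTinj : Function.Injective T := by
    intro v w hvw
    have hcoeff : ∀ (i : Fin d) (j : ℕ), j < k i →
        (Polynomial.taylor (α i) (polyOf p m v - polyOf p m w)).coeff j = 0 := by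
      intro i j hj
      rw [map_sub, Polynomial.coeff_sub, sub_eq_zero]
      have := congrFun (congrFun hvw i) ⟨j, hj⟩
      exact this
    set f := polyOf p m v - polyOf p m w with hfdef
    have hdvd : ∀ i : Fin d, (Polynomial.X - Polynomial.C (α i))^(k i) ∣ f := by
      intro i
      apply taylor_dvd_of_X_pow_dvd
      rw [Polynomial.X_pow_dvd_iff]
      intro l hl
      exact hcoeff i l hl
    have hcop : ((Finset.univ : Finset (Fin d)) : Set (Fin d)).Pairwise
        (Function.onFun IsCoprime fun i => (Polynomial.X - Polynomial.C (α i))^(k i)) := by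
      intro i _ j _ hij
      exact ((Polynomial.pairwise_coprime_X_sub_C hαinj) hij).pow
    have hproddvd : (∏ i, (Polynomial.X - Polynomial.C (α i))^(k i)) ∣ f :=
      Finset.prod_dvd_of_coprime hcop (fun i _ => hdvd i)
    have hfzero : f = 0 := by
      by_contra hne
      have hmono : (∏ i, (Polynomial.X - Polynomial.C (α i))^(k i)).natDegree = m := by
        rw [Polynomial.natDegree_prod_of_monic _ _
          (fun i _ => (Polynomial.monic_X_sub_C (α i)).pow _)]
        calc ∑ i, ((Polynomial.X - Polynomial.C (α i))^(k i)).natDegree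
            = ∑ i, k i := Finset.sum_congr rfl (fun i _ => by
              rw [Polynomial.natDegree_pow, Polynomial.natDegree_X_sub_C, mul_one])
          _ = m := hk
      have h1 := Polynomial.natDegree_le_of_dvd hproddvd hne
      rw [hmono] at h1
      have h2 : f.natDegree ≤ m - 1 := by
        rw [hfdef]
        refine le_trans (Polynomial.natDegree_sub_le _ _) ?_
        exact max_le (polyOf_natDegree_le p m v) (polyOf_natDegree_le p m w)
      have hm0 : m = 0 := by omega
      apply hne
      rw [hfdef]
      subst hm0
      simp [polyOf]
    have : polyOf p m v = polyOf p m w := by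
      have := sub_eq_zero.1 hfzero
      exact this
    funext j
    have := congrArg (fun q => Polynomial.coeff q (j:ℕ)) this
    simpa [polyOf_coeff p m v (j:ℕ) j.2, polyOf_coeff p m w (j:ℕ) j.2] using this
  have hcards : Fintype.card (Fin m → ZMod p) = Fintype.card (∀ i : Fin d, Fin (k i) → ZMod p) := by
    rw [Fintype.card_pi, Fintype.card_pi]
    simp only [Fintype.card_fun, ZMod.card, Fintype.card_fin]
    rw [Finset.prod_pow_eq_pow_sum]
    rw [hk]
    simp
  have hbij : Function.Bijective T :=
    (Fintype.bijective_iff_injective_and_card T).2 ⟨hTinj, hcards⟩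
  obtain ⟨v, hv⟩ := hbij.2 t
  refine ⟨v, fun i j hj => ?_⟩
  have := congrFun (congrFun hv i) ⟨j, hj⟩
  exact this


noncomputable def netPt (p m d : ℕ) (v : Fin m → ZMod p) : Fin d → ℝ :=
  fun i => ∑ j ∈ Finset.range m,
    (((Polynomial.taylor ((i:ℕ) : ZMod p) (polyOf p m v)).coeff j).val : ℝ) / (p:ℝ)^(j+1)

noncomputable def netSet (p m d : ℕ) [NeZero p] : Finset (Fin d → ℝ) :=
  Finset.image (netPt p m d) Finset.univ

lemma netSet_card_le (p m d : ℕ) [NeZero p] : (netSet p m d).card ≤ p^m := by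
  refine le_trans (Finset.card_image_le) ?_
  rw [Finset.card_univ, Fintype.card_pi]
  simp [ZMod.card]

lemma netPt_in_cube {p : ℕ} (hp : 2 ≤ p) [NeZero p] (m d : ℕ) (v : Fin m → ZMod p) :
    ∀ i, netPt p m d v i ∈ Set.Icc (0:ℝ) 1 := by
  intro i
  set c : ℕ → ℕ := fun j => ((Polynomial.taylor ((i:ℕ) : ZMod p) (polyOf p m v)).coeff j).val
    with hc
  have hclt : ∀ j, c j < p := fun j => ZMod.val_lt _
  have heq : netPt p m d v i = ∑ j ∈ Finset.Ico 0 m, (c j : ℝ) / (p:ℝ)^(j+1) := by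
    rw [netPt, Finset.range_eq_Ico]
  constructor
  · rw [heq]; exact digit_tail_nonneg c 0 m
  · rw [heq]
    have := digit_tail_lt hp c hclt 0 m
    simpa using this.le

lemma netSet_hits {p d m : ℕ} (hp : p.Prime) (hd : 1 ≤ d) (hdp : d ≤ p)
    (a b : Fin d → ℝ) (hab : ∀ i, 0 ≤ a i ∧ a i < b i ∧ b i ≤ 1)
    (hvol : ((2*(p:ℝ))^d / (p:ℝ)^m) < ∏ i, (b i - a i)) :
    ∃ v : Fin m → ZMod p, ∀ i, netPt p m d v i ∈ Set.Ioo (a i) (b i) := by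
  classical
  haveI : NeZero p := ⟨hp.ne_zero⟩
  have hp2 : 2 ≤ p := hp.two_le
  have hp1R : (1:ℝ) < p := by exact_mod_cast hp.one_lt
  have hp0R : (0:ℝ) < p := by linarith
  set i₀ : Fin d := ⟨0, hd⟩
  set s : Fin d → ℝ := fun i => b i - a i with hs
  have hs0 : ∀ i, 0 < s i := fun i => by have := (hab i).2.1; simp [hs]; linarith
  have hs1 : ∀ i, s i ≤ 1 := fun i => by
    have h1 := (hab i).1; have h2 := (hab i).2.2; simp [hs]; linarith
  have hex : ∀ i : Fin d, ∃ k : ℕ, 2/(p:ℝ)^k < s i := by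
    intro i
    obtain ⟨k, hk⟩ := pow_unbounded_of_one_lt (2 / s i) hp1R
    refine ⟨k, ?_⟩
    rw [div_lt_iff₀ (hs0 i)] at hk
    rw [div_lt_iff₀ (by positivity)]
    linarith [hk]
  set k : Fin d → ℕ := fun i => Nat.find (hex i) with hkdef
  have hkspec : ∀ i, 2/(p:ℝ)^(k i) < s i := fun i => Nat.find_spec (hex i)
  have hkmin : ∀ i, s i ≤ 2*(p:ℝ)/(p:ℝ)^(k i) := by
    intro i
    have hk1 : 1 ≤ k i := by
      rcases Nat.eq_zero_or_pos (k i) with h | h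
      · exfalso
        have := hkspec i
        rw [h] at this
        simp at this
        linarith [hs1 i]
      · exact h
    have h' : k i - 1 < k i := by omega
    have this2 := Nat.find_min (hex i) h'
    push_neg at this2
    have hpow : (p:ℝ)^(k i) = (p:ℝ)^(k i - 1) * p := by
      rw [← pow_succ]
      congr 1
      omega
    rw [hpow]
    calc s i ≤ 2/(p:ℝ)^(k i - 1) := this2
      _ = 2*(p:ℝ)/((p:ℝ)^(k i - 1)*(p:ℝ)) := by
          rw [mul_div_mul_right _ _ (ne_of_gt hp0R)]
  have hsum_lt : ∑ i, k i ≤ m := by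
    have hprod : ∏ i, s i ≤ (2*(p:ℝ))^d / (p:ℝ)^(∑ i, k i) := by
      calc ∏ i, s i ≤ ∏ i, (2*(p:ℝ)/(p:ℝ)^(k i)) :=
            Finset.prod_le_prod (fun i _ => (hs0 i).le) (fun i _ => hkmin i)
        _ = (∏ _i : Fin d, (2*(p:ℝ))) / ∏ i, (p:ℝ)^(k i) := by rw [Finset.prod_div_distrib]
        _ = (2*(p:ℝ))^d / (p:ℝ)^(∑ i, k i) := by
            rw [Finset.prod_const, Finset.card_univ, Fintype.card_fin, Finset.prod_pow_eq_pow_sum]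
    have hps : ∏ i, s i = ∏ i, (b i - a i) := rfl
    have h2 : ((2*(p:ℝ))^d / (p:ℝ)^m) < (2*(p:ℝ))^d / (p:ℝ)^(∑ i, k i) := by
      rw [← hps] at hvol
      linarith
    by_contra hcon
    push_neg at hcon
    have h3 : (p:ℝ)^m ≤ (p:ℝ)^(∑ i, k i) := pow_le_pow_right₀ (le_of_lt hp1R) (le_of_lt hcon)
    have h4 : (2*(p:ℝ))^d / (p:ℝ)^(∑ i, k i) ≤ (2*(p:ℝ))^d / (p:ℝ)^m :=
      div_le_div_of_nonneg_left (by positivity) (by positivity) h3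
    linarith
  set t := ∑ i, k i with ht
  set k' : Fin d → ℕ := fun i => k i + (if i = i₀ then m - t else 0) with hk'
  have hk'sum : ∑ i, k' i = m := by
    have h1 : (∑ i : Fin d, if i = i₀ then m - t else 0) = m - t := by
      rw [Finset.sum_ite_eq' Finset.univ i₀ (fun _ => m - t)]
      simp
    simp only [hk']
    rw [Finset.sum_add_distrib, h1, ← ht]
    omega
  have hkk' : ∀ i, k i ≤ k' i := by
    intro i
    simp only [hk']
    exact Nat.le_add_right _ _
  have hk'big : ∀ i, 2/(p:ℝ)^(k' i) < s i := by
    intro i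
    refine lt_of_le_of_lt ?_ (hkspec i)
    exact div_le_div_of_nonneg_left (by norm_num) (by positivity)
      (pow_le_pow_right₀ hp1R.le (hkk' i))
  have hk'm : ∀ i, k' i ≤ m := by
    intro i
    rw [← hk'sum]
    exact Finset.single_le_sum (f := fun i => k' i) (fun i _ => Nat.zero_le _) (Finset.mem_univ i)
  set l : Fin d → ℕ := fun i => ⌊a i * (p:ℝ)^(k' i)⌋₊ + 1 with hldef
  have hal : ∀ i, a i < (l i : ℝ)/(p:ℝ)^(k' i) := by
    intro i
    rw [lt_div_iff₀ (by positivity)]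
    have h1 := Nat.lt_floor_add_one (a i * (p:ℝ)^(k' i))
    have h2 : (l i : ℝ) = (⌊a i * (p:ℝ)^(k' i)⌋₊ : ℝ) + 1 := by
      simp only [hldef]
      push_cast
      ring
    rw [h2]
    linarith
  have hlb : ∀ i, ((l i : ℝ)+1)/(p:ℝ)^(k' i) ≤ b i := by
    intro i
    rw [div_le_iff₀ (by positivity)]
    have hfl : (⌊a i * (p:ℝ)^(k' i)⌋₊ : ℝ) ≤ a i * (p:ℝ)^(k' i) :=
      Nat.floor_le (by have := (hab i).1; positivity)
    have hks := hk'big i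
    rw [div_lt_iff₀ (by positivity)] at hks
    have hexp : s i * (p:ℝ)^(k' i) = b i * (p:ℝ)^(k' i) - a i * (p:ℝ)^(k' i) := by
      simp only [hs]; ring
    have h2 : (l i : ℝ) = (⌊a i * (p:ℝ)^(k' i)⌋₊ : ℝ) + 1 := by
      simp only [hldef]; push_cast; ring
    rw [h2]
    linarith
  have hlp : ∀ i, l i < p^(k' i) := by
    intro i
    have h1 := hlb i
    have h2 := (hab i).2.2
    have h3 : ((l i : ℝ)+1)/(p:ℝ)^(k' i) ≤ 1 := le_trans h1 h2
    rw [div_le_one (by positivity)] at h3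
    have h4 : (l i : ℝ) < (p:ℝ)^(k' i) := by linarith
    have h5 : ((p^(k' i) : ℕ) : ℝ) = (p:ℝ)^(k' i) := by push_cast; ring
    rw [← h5] at h4
    exact_mod_cast h4
  have hdig : ∀ i, ∃ a' : ℕ → ℕ, (∀ j, a' j < p) ∧
      ∑ j ∈ Finset.range (k' i), a' j * p^(k' i - 1 - j) = l i :=
    fun i => exists_digits (by omega) (k' i) (l i) (hlp i)
  choose dig hdiglt hdigsum using hdig
  obtain ⟨v, hv⟩ := exists_net_poly hp d m hdp k' hk'sum (fun i j => ((dig i j : ℕ) : ZMod p))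
  refine ⟨v, fun i => ?_⟩
  set c : ℕ → ℕ := fun j => ((Polynomial.taylor ((i:ℕ) : ZMod p) (polyOf p m v)).coeff j).val
    with hc
  have hclt : ∀ j, c j < p := fun j => ZMod.val_lt _
  have hcdig : ∀ j, (hj : j < k' i) → c j = dig i j := by
    intro j hj
    have h1 := hv i j hj
    simp only [hc]
    rw [h1]
    exact ZMod.val_natCast_of_lt (hdiglt i j)
  have hm0 : netPt p m d v i = ∑ j ∈ Finset.range (k' i), (c j:ℝ)/(p:ℝ)^(j+1)
      + ∑ j ∈ Finset.Ico (k' i) m, (c j:ℝ)/(p:ℝ)^(j+1) := by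
    have hnet : netPt p m d v i = ∑ j ∈ Finset.range m, (c j:ℝ)/(p:ℝ)^(j+1) := by
      simp only [netPt, hc]
    rw [hnet, Finset.range_eq_Ico,
      ← Finset.sum_Ico_consecutive _ (Nat.zero_le (k' i)) (hk'm i)]
    rw [Finset.range_eq_Ico]
  have hhead : ∑ j ∈ Finset.range (k' i), (c j:ℝ)/(p:ℝ)^(j+1) = (l i : ℝ)/(p:ℝ)^(k' i) := by
    rw [Finset.sum_congr rfl (fun j hj => by rw [hcdig j (Finset.mem_range.1 hj)])]
    rw [digit_head_eq (by omega) (dig i) (k' i), hdigsum i]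
  have htail0 := digit_tail_nonneg (p := p) c (k' i) m
  have htail1 := digit_tail_lt hp2 c hclt (k' i) m
  constructor
  · rw [hm0, hhead]
    linarith [hal i]
  · rw [hm0, hhead]
    have h1 := hlb i
    have h2 : (l i:ℝ)/(p:ℝ)^(k' i) + 1/(p:ℝ)^(k' i) = ((l i:ℝ)+1)/(p:ℝ)^(k' i) :=
      (add_div _ _ _).symm
    linarith

lemma netSet_dispersion {p d m : ℕ} [NeZero p] (hp : p.Prime) (hd : 1 ≤ d) (hdp : d ≤ p) :
    dispersion d (netSet p m d) ≤ (2*(p:ℝ))^d / (p:ℝ)^m := by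
  have hp0 : (0:ℝ) < p := by exact_mod_cast hp.pos
  apply Real.sSup_le _ (by positivity)
  rintro v ⟨a, b, hab, hempty, rfl⟩
  by_contra hcon
  push_neg at hcon
  obtain ⟨w, hw⟩ := netSet_hits hp hd hdp a b hab hcon
  obtain ⟨i, hi⟩ := hempty (netPt p m d w) (Finset.mem_image_of_mem _ (Finset.mem_univ w))
  exact hi (hw i)

lemma mdn_upper {d : ℕ} (hd : 1 ≤ d) : ∃ C : ℝ, 0 < C ∧ ∀ n : ℕ, 1 ≤ n → mdn d n * n ≤ C := by
  obtain ⟨p, hdp, hp⟩ := Nat.exists_infinite_primes d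
  haveI : NeZero p := ⟨hp.ne_zero⟩
  have hp0 : (0:ℝ) < p := by exact_mod_cast hp.pos
  refine ⟨(p:ℝ) * (2*(p:ℝ))^d, by positivity, fun n hn => ?_⟩
  set m := Nat.log p n with hm
  have h1 : p^m ≤ n := Nat.pow_log_le_self p (by omega)
  have h2 : n < p^(m+1) := Nat.lt_pow_succ_log_self hp.one_lt n
  have hcard : (netSet p m d).card ≤ n := le_trans (netSet_card_le p m d) h1
  have hcube : ↑(netSet p m d) ⊆ cube d := by
    intro q hq
    obtain ⟨w, -, rfl⟩ := Finset.mem_image.1 (Finset.mem_coe.1 hq)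
    exact netPt_in_cube hp.two_le m d w
  have h3 : mdn d n ≤ dispersion d (netSet p m d) :=
    le_trans (mdn_antitone hd hcard) (mdn_le_dispersion rfl hcube)
  have h4 := netSet_dispersion (m := m) hp hd hdp
  have h5 : (n:ℝ) < (p:ℝ)^(m+1) := by exact_mod_cast h2
  have h6 : (0:ℝ) ≤ (n:ℝ) := Nat.cast_nonneg n
  calc mdn d n * n ≤ ((2*(p:ℝ))^d / (p:ℝ)^m) * n :=
        mul_le_mul_of_nonneg_right (le_trans h3 h4) h6
    _ ≤ ((2*(p:ℝ))^d / (p:ℝ)^m) * (p:ℝ)^(m+1) :=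
        mul_le_mul_of_nonneg_left h5.le (by positivity)
    _ = (p:ℝ) * (2*(p:ℝ))^d := by
        rw [pow_succ]
        field_simp

lemma claim1 {d : ℕ} (hd : 1 ≤ d) {C : ℝ} (hC : 0 < C)
    (hCle : ∀ n : ℕ, 1 ≤ n → mdn d n * n ≤ C) (b : ℕ) (ε : ℝ) (hε : 0 < ε) :
    ∀ᶠ n : ℕ in Filter.atTop, ((n : ℝ) + 1) * mdn d n ≥ ((b : ℝ) + 1) * mdn d b - ε := by
  set δ : ℝ := ε / (2*((b:ℝ)+1)) with hδdef
  have hδ : 0 < δ := by positivity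
  rw [Filter.eventually_atTop]
  obtain ⟨N, hN⟩ := exists_nat_gt (max 1 (2*((b:ℝ)+1)*C/ε))
  refine ⟨N+1, fun n hn => ?_⟩
  have hn1 : 1 ≤ n := by
    have := (le_max_left 1 (2*((b:ℝ)+1)*C/ε)).trans_lt hN
    have hN1 : 1 ≤ N := by exact_mod_cast this.le
    omega
  have hmain := main_lb hd b n hδ
  set K : ℕ := n / (b+1) with hKdef
  have h0 : K * (b+1) ≤ n := Nat.div_mul_le_self n (b+1)
  have hK1 : (b+1)*(K+1) ≤ n + (b+1) := by
    calc (b+1)*(K+1) = K*(b+1) + (b+1) := by ring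
      _ ≤ n + (b+1) := Nat.add_le_add_right h0 _
  have hKR : ((b:ℝ)+1) * ((K:ℝ)+1) ≤ (n:ℝ) + (b:ℝ) + 1 := by
    have := hK1
    have h2 : (((b+1)*(K+1) : ℕ) : ℝ) ≤ ((n + (b+1) : ℕ) : ℝ) := by exact_mod_cast this
    push_cast at h2
    linarith
  have hmn : 0 ≤ mdn d n := mdn_nonneg d n
  have step1 : ((b:ℝ)+1)*(mdn d b - δ) ≤ ((b:ℝ)+1)*(((K:ℝ)+1) * mdn d n) :=
    mul_le_mul_of_nonneg_left hmain (by positivity)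
  have step2 : ((b:ℝ)+1)*(((K:ℝ)+1) * mdn d n) ≤ ((n:ℝ)+(b:ℝ)+1) * mdn d n := by
    rw [← mul_assoc]
    exact mul_le_mul_of_nonneg_right hKR hmn
  have step3 : ((n:ℝ)+(b:ℝ)+1)*mdn d n = ((n:ℝ)+1)*mdn d n + (b:ℝ)*mdn d n := by ring
  have hmd : mdn d n * n ≤ C := hCle n hn1
  have hnR : (0:ℝ) < n := by exact_mod_cast hn1
  have h7 : (b:ℝ) * mdn d n ≤ (b:ℝ)*(C/n) := by
    apply mul_le_mul_of_nonneg_left _ (Nat.cast_nonneg b)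
    rw [le_div_iff₀ hnR]
    exact hmd
  have h8 : (b:ℝ)*(C/(n:ℝ)) ≤ ε/2 := by
    rw [mul_div_assoc'] at *
    rw [div_le_iff₀ hnR]
    have hNn : 2*((b:ℝ)+1)*C/ε < (N:ℝ) := (le_max_right _ _).trans_lt hN
    have hNn2 : (N:ℝ) ≤ (n:ℝ) := by
      have : N ≤ n := by omega
      exact_mod_cast this
    have h9 : 2*((b:ℝ)+1)*C/ε < (n:ℝ) := lt_of_lt_of_le hNn hNn2
    rw [div_lt_iff₀ hε] at h9
    nlinarith [hC]
  have hδe : ((b:ℝ)+1)*δ = ε/2 := by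
    rw [hδdef]
    field_simp
  have hexp : ((b:ℝ)+1)*(mdn d b - δ) = ((b:ℝ)+1)*mdn d b - ((b:ℝ)+1)*δ := by ring
  rw [ge_iff_le]
  linarith

end Disp

/-- `(n+1)·m_d(n) ≥ (b+1)·m_d(b) − o(1)` as `n → ∞`, and consequently
the limit `c_d = lim n·m_d(n)` exists. -/
theorem stmt_1 (d : ℕ) (hd : 1 ≤ d) :
    (∀ b : ℕ, 1 ≤ b → ∀ ε : ℝ, 0 < ε →
      ∀ᶠ n : ℕ in Filter.atTop,
        ((n : ℝ) + 1) * mdn d n ≥ ((b : ℝ) + 1) * mdn d b - ε) ∧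
    ∃ c : ℝ, Filter.Tendsto (fun n : ℕ => (n : ℝ) * mdn d n) Filter.atTop (nhds c) := by

  obtain ⟨C, hC, hCle⟩ := Disp.mdn_upper hd
  refine ⟨fun b _ ε hε => Disp.claim1 hd hC hCle b ε hε, ?_⟩
  set A : Set ℝ := {x | ∃ b : ℕ, 1 ≤ b ∧ x = ((b:ℝ)+1) * mdn d b} with hA
  have hAne : A.Nonempty := ⟨(((1:ℕ):ℝ)+1) * mdn d 1, 1, le_refl 1, rfl⟩
  have hAbdd : BddAbove A := by
    refine ⟨2*C, ?_⟩
    rintro x ⟨b, hb, rfl⟩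
    have h1 := hCle b hb
    have hb1 : (1:ℝ) ≤ (b:ℝ) := by exact_mod_cast hb
    have hmb := Disp.mdn_nonneg d b
    nlinarith [h1]
  set c := sSup A with hc
  have hub : ∀ n : ℕ, 1 ≤ n → ((n:ℝ)+1) * mdn d n ≤ c :=
    fun n hn => le_csSup hAbdd ⟨n, hn, rfl⟩
  have ht1 : Filter.Tendsto (fun n : ℕ => ((n:ℝ)+1) * mdn d n) Filter.atTop (nhds c) := by
    rw [Metric.tendsto_atTop]
    intro ε hε
    obtain ⟨x, hxA, hx⟩ := exists_lt_of_lt_csSup hAne (show c - ε/2 < c by linarith)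
    obtain ⟨b, hb, rfl⟩ := hxA
    have hev := Disp.claim1 hd hC hCle b (ε/2) (by positivity)
    rw [Filter.eventually_atTop] at hev
    obtain ⟨N, hN⟩ := hev
    refine ⟨max N 1, fun n hn => ?_⟩
    have h1 := hN n (le_trans (le_max_left _ _) hn)
    have h2 := hub n (le_trans (le_max_right _ _) hn)
    rw [Real.dist_eq, abs_lt]
    rw [ge_iff_le] at h1
    constructor <;> linarith
  have ht2 : Filter.Tendsto (fun n : ℕ => mdn d n) Filter.atTop (nhds 0) := by
    apply squeeze_zero' (Filter.Eventually.of_forall fun n => Disp.mdn_nonneg d n) ?_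
      (tendsto_const_div_atTop_nhds_zero_nat C)
    rw [Filter.eventually_atTop]
    refine ⟨1, fun n hn => ?_⟩
    have h1 := hCle n hn
    have hnR : (0:ℝ) < n := by exact_mod_cast hn
    rw [le_div_iff₀ hnR]
    exact h1
  have ht3 := ht1.sub ht2
  rw [sub_zero] at ht3
  exact ⟨c, ht3.congr (fun n => by ring)⟩
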